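/- arXiv:1903.04575 — 6 statements merged into one kernel-verified Lean document; each statement's English description precedes it below -/
import Mathlib

section
/- Let G be a connected graph with v1 and v2 non-adjacent twin vertices (same neighborhoods, hence same distances to every other vertex, with d(v1,v2) = 2) sharing transmission k. Then (k+2)/k is an eigenvalue of the normalized distance Laplacian of G, with eigenvector (1, -1, 0, ..., 0) (supported on v1, v2). -/
open Matrix

theorem stmt6 {n : ℕ} (G : SimpleGraph (Fin n)) (hG : G.Connected)
    (v1 v2 : Fin n) (hne : v1 ≠ v2) (hnadj : ¬ G.Adj v1 v2)
    (htwin : ∀ u, u ≠ v1 → u ≠ v2 → G.dist v1 u = G.dist v2 u)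
    (hd12 : G.dist v1 v2 = 2)
    (k : ℝ) (hk : 0 < k)
    (t : Fin n → ℝ) (ht : t = fun i => ∑ j, (G.dist i j : ℝ))
    (ht1 : t v1 = k) (ht2 : t v2 = k)
    (M : Matrix (Fin n) (Fin n) ℝ)
    (hM : M = Matrix.of fun i j =>
      if i = j then (1 : ℝ) else -(G.dist i j : ℝ) / Real.sqrt (t i * t j))
    (x : Fin n → ℝ)
    (hx : x = fun u => if u = v1 then (1 : ℝ) else if u = v2 then -1 else 0) :
    M *ᵥ x = ((k + 2) / k) • x := by
  have hsqrt : Real.sqrt (k * k) = k := Real.sqrt_mul_self hk.le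
  have hd21 : G.dist v2 v1 = 2 := by rw [G.dist_comm]; exact hd12
  funext i
  have key : (M *ᵥ x) i = M i v1 - M i v2 := by
    subst hx
    simp only [mulVec, dotProduct]
    have hterm : ∀ j, M i j * (if j = v1 then (1:ℝ) else if j = v2 then -1 else 0)
        = (if j = v1 then M i j else 0) - (if j = v2 then M i j else 0) := by
      intro j
      by_cases h1 : j = v1
      · have h2 : j ≠ v2 := by rw [h1]; exact hne
        simp [h1, h2, hne]
      · by_cases h2 : j = v2 <;> simp [h1, h2, Ne.symm hne]
    simp_rw [hterm, Finset.sum_sub_distrib, Finset.sum_ite_eq', Finset.mem_univ, if_true]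
  rw [key]
  subst hM
  by_cases h1 : i = v1
  · subst h1
    simp only [Pi.smul_apply, hx, smul_eq_mul, of_apply, if_pos rfl, if_neg hne, ht1, ht2,
      hd12, hsqrt]
    push_cast
    field_simp
    ring
  · by_cases h2 : i = v2
    · subst h2
      simp only [Pi.smul_apply, hx, smul_eq_mul, of_apply, if_pos rfl, if_neg hne,
        if_neg (Ne.symm hne), ht1, ht2, hd21, hsqrt]
      push_cast
      field_simp
      ring
    · have hdist : G.dist i v1 = G.dist i v2 := by
        calc G.dist i v1 = G.dist v1 i := G.dist_comm
          _ = G.dist v2 i := htwin i h1 h2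
          _ = G.dist i v2 := G.dist_comm
      simp only [Pi.smul_apply, hx, smul_eq_mul, of_apply, if_neg h1, if_neg h2,
        ht1, ht2, hdist, mul_zero, sub_self]
end

section
/- Let G be a connected graph with v1 and v2 adjacent twin vertices (same neighborhoods among other vertices, v1v2 ∈ E) sharing transmission k. Then (k+1)/k is an eigenvalue of the normalized distance Laplacian of G, with eigenvector (1, -1, 0, ..., 0) supported on v1, v2. -/
open Matrix

theorem stmt7 {n : ℕ} (G : SimpleGraph (Fin n)) (hG : G.Connected)
    (v1 v2 : Fin n) (hne : v1 ≠ v2) (hadj : G.Adj v1 v2)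
    (htwin : ∀ u, u ≠ v1 → u ≠ v2 → G.dist v1 u = G.dist v2 u)
    (hd12 : G.dist v1 v2 = 1)
    (k : ℝ) (hk : 0 < k)
    (t : Fin n → ℝ) (ht : t = fun i => ∑ j, (G.dist i j : ℝ))
    (ht1 : t v1 = k) (ht2 : t v2 = k)
    (M : Matrix (Fin n) (Fin n) ℝ)
    (hM : M = Matrix.of fun i j =>
      if i = j then (1 : ℝ) else -(G.dist i j : ℝ) / Real.sqrt (t i * t j))
    (x : Fin n → ℝ)
    (hx : x = fun u => if u = v1 then (1 : ℝ) else if u = v2 then -1 else 0) :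
    M *ᵥ x = ((k + 1) / k) • x := by
  subst hM hx
  funext i
  have hsum : ∀ i : Fin n,
      (Matrix.of fun i j => if i = j then (1 : ℝ)
        else -(G.dist i j : ℝ) / Real.sqrt (t i * t j)) *ᵥ
        (fun u => if u = v1 then (1 : ℝ) else if u = v2 then -1 else 0) =
      fun i => (if i = v1 then (1:ℝ) else -(G.dist i v1 : ℝ) / Real.sqrt (t i * t v1))
        - (if i = v2 then (1:ℝ) else -(G.dist i v2 : ℝ) / Real.sqrt (t i * t v2)) := by
    intro i
    funext i
    simp only [Matrix.mulVec, Matrix.of_apply, dotProduct]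
    rw [Finset.sum_eq_add_of_mem v1 v2 (Finset.mem_univ _) (Finset.mem_univ _) hne]
    · simp [hne, hne.symm]
      ring
    · intro c _ hc
      push_cast
      simp [hc.1, hc.2]
  rw [hsum i]
  have hsqkk : Real.sqrt (k * k) = k := by
    rw [Real.sqrt_mul_self hk.le]
  by_cases h1 : i = v1
  · subst h1
    simp only [if_pos rfl, if_neg hne, Pi.smul_apply, smul_eq_mul, ht1, ht2, hd12, hsqkk]
    push_cast
    field_simp
    ring
  · by_cases h2 : i = v2
    · subst h2
      have hdc : G.dist i v1 = 1 := by
        rw [SimpleGraph.dist_comm (G := G) (u := i) (v := v1)]; exact hd12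
      simp only [if_neg h1, if_pos rfl, Pi.smul_apply, smul_eq_mul, ht1, ht2, hdc, hsqkk]
      push_cast
      field_simp
      ring
    · have hd : G.dist i v1 = G.dist i v2 := by
        rw [SimpleGraph.dist_comm (G := G) (u := i) (v := v1),
            SimpleGraph.dist_comm (G := G) (u := i) (v := v2)]
        exact htwin i h1 h2
      simp [h1, h2, hd, ht1, ht2]
end

section
/- The normalized distance Laplacian spectrum of the complete bipartite graph K_{m,n} is {0, (2n+m)/(2n+m-2) with multiplicity n-1, (n+2m)/(n+2m-2) with multiplicity m-1, 2(n²+m²+mn-n-m)/((2n+m-2)(n+2m-2)) with multiplicity 1}. -/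
open Matrix Polynomial Finset

namespace Stmt8Aux

lemma sum_one {k : ℕ} (c : Fin k) (x : ℝ) (g : Fin k → ℝ) :
    ∑ j, (if j = c then x else 0) * g j = x * g c := by
  rw [Finset.sum_eq_single_of_mem c (Finset.mem_univ c)]
  · simp
  · intro b _ hb; simp [hb]

lemma sum_two {k : ℕ} [NeZero k] (i : Fin k) (hi : i ≠ 0) (x y : ℝ) (g : Fin k → ℝ) :
    ∑ j, (if j = i then x else if j = 0 then y else 0) * g j = x * g i + y * g 0 := by
  rw [Finset.sum_eq_add_of_mem i 0 (Finset.mem_univ _) (Finset.mem_univ _) hi]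
  · simp [Ne.symm hi]
  · rintro c _ ⟨hc1, hc2⟩; simp [hc1, hc2]

lemma sum_colP {k : ℕ} [NeZero k] (i : Fin k) (x : ℝ) (g : Fin k → ℝ) :
    ∑ j, (if j = 0 then x else if i = j then 1 else 0) * g j
      = x * g 0 + (if i = 0 then 0 else g i) := by
  rcases eq_or_ne i 0 with rfl | hi
  · rw [Finset.sum_eq_single_of_mem 0 (Finset.mem_univ _)]
    · simp
    · intro b _ hb; simp [hb, Ne.symm hb]
  · rw [Finset.sum_eq_add_of_mem 0 i (Finset.mem_univ _) (Finset.mem_univ _) (Ne.symm hi)]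
    · simp [hi]
    · rintro c _ ⟨hc0, hci⟩; simp [hc0, Ne.symm hci]

lemma sum_one_bare {k : ℕ} (c : Fin k) (x : ℝ) :
    (∑ j : Fin k, if j = c then x else 0) = x := by
  simpa using sum_one c x (fun _ => 1)

lemma sum_two_bare {k : ℕ} [NeZero k] (i : Fin k) (hi : i ≠ 0) (x y : ℝ) :
    (∑ j : Fin k, if j = i then x else if j = 0 then y else 0) = x + y := by
  simpa using sum_two i hi x y (fun _ => 1)

lemma sum_colP_bare {k : ℕ} [NeZero k] (i : Fin k) (x : ℝ) :
    (∑ j : Fin k, if j = 0 then x else if i = j then 1 else 0)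
      = x + (if i = 0 then 0 else 1) := by
  simpa using sum_colP i x (fun _ => 1)

lemma sum_rowM {k : ℕ} (i : Fin k) (x y : ℝ) (g : Fin k → ℝ) :
    ∑ j, (if i = j then x else y) * g j = (x - y) * g i + y * ∑ j, g j := by
  have h : ∀ j, (if i = j then x else y) * g j
      = (if j = i then (x - y) * g i else 0) + y * g j := by
    intro j
    rcases eq_or_ne j i with rfl | hj
    · simp; ring
    · simp [hj, Ne.symm hj]
  rw [Finset.sum_congr rfl fun j _ => h j, Finset.sum_add_distrib, ← Finset.mul_sum]
  simp

lemma sum_rowM_bare {k : ℕ} (i : Fin k) (x y : ℝ) :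
    (∑ j : Fin k, if i = j then x else y) = x - y + y * (k : ℝ) := by
  have h := sum_rowM i x y (fun _ => 1)
  simpa [Finset.card_univ, mul_comm] using h

lemma sum_ite_const {N : ℕ} (c : Prop) [Decidable c] (x : ℝ) :
    (∑ _j : Fin N, if c then x else 0) = if c then N * x else 0 := by
  split_ifs <;> simp [Finset.sum_const, mul_comm]

lemma sum_ite_const' {N : ℕ} (c : Prop) [Decidable c] (x : ℝ) (kk : Fin N) :
    (∑ j : Fin N, if c then x else if j = kk then 1 else 0) = if c then N * x else 1 := by
  split_ifs <;> simp [Finset.sum_const, mul_comm, sum_one_bare]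

noncomputable def sa (n m : ℕ) : ℝ := Real.sqrt (2*(n:ℝ) + m - 2)
noncomputable def sb (n m : ℕ) : ℝ := Real.sqrt ((n:ℝ) + 2*m - 2)
noncomputable def av (n m : ℕ) : ℝ := 2 / (2*(n:ℝ) + m - 2)
noncomputable def bv (n m : ℕ) : ℝ := 2 / ((n:ℝ) + 2*m - 2)
noncomputable def cv (n m : ℕ) : ℝ := 1 / (sa n m * sb n m)
noncomputable def Sv (n m : ℕ) : ℝ := n * (2*(n:ℝ) + m - 2) + m * ((n:ℝ) + 2*m - 2)
noncomputable def tuA (n m : ℕ) : ℝ := (-(av n m) * n * sa n m - cv n m * m * sb n m) / Sv n m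
noncomputable def twA (n m : ℕ) : ℝ := (-(av n m) * sb n m + cv n m * sa n m) / Sv n m
noncomputable def tuB (n m : ℕ) : ℝ := (-(cv n m) * n * sa n m - bv n m * m * sb n m) / Sv n m
noncomputable def twB (n m : ℕ) : ℝ := (-(cv n m) * sb n m + bv n m * sa n m) / Sv n m
noncomputable def lam (n m : ℕ) : ℝ := 2 - ((n:ℝ)-1) * av n m - ((m:ℝ)-1) * bv n m

section Facts
variable {n m : ℕ}

lemma hA_pos (hn : 2 ≤ n) (hm : 2 ≤ m) : (0:ℝ) < 2*(n:ℝ) + m - 2 := by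
  have h1 : (2:ℝ) ≤ n := by exact_mod_cast hn
  have h2 : (2:ℝ) ≤ m := by exact_mod_cast hm
  nlinarith

lemma hB_pos (hn : 2 ≤ n) (hm : 2 ≤ m) : (0:ℝ) < (n:ℝ) + 2*m - 2 := by
  have h1 : (2:ℝ) ≤ n := by exact_mod_cast hn
  have h2 : (2:ℝ) ≤ m := by exact_mod_cast hm
  nlinarith

lemma sa_pos (hn : 2 ≤ n) (hm : 2 ≤ m) : 0 < sa n m := Real.sqrt_pos.mpr (hA_pos hn hm)
lemma sb_pos (hn : 2 ≤ n) (hm : 2 ≤ m) : 0 < sb n m := Real.sqrt_pos.mpr (hB_pos hn hm)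
lemma sa_sq (hn : 2 ≤ n) (hm : 2 ≤ m) : sa n m ^ 2 = 2*(n:ℝ) + m - 2 := Real.sq_sqrt (hA_pos hn hm).le
lemma sb_sq (hn : 2 ≤ n) (hm : 2 ≤ m) : sb n m ^ 2 = (n:ℝ) + 2*m - 2 := Real.sq_sqrt (hB_pos hn hm).le

lemma hS_ne (hn : 2 ≤ n) (hm : 2 ≤ m) : (n:ℝ) * (2*(n:ℝ) + m - 2) + (m:ℝ) * ((n:ℝ) + 2*m - 2) ≠ 0 := by
  have h1 : (2:ℝ) ≤ n := by exact_mod_cast hn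
  have h2 : (2:ℝ) ≤ m := by exact_mod_cast hm
  nlinarith

lemma ncast (hn : 2 ≤ n) (hm : 2 ≤ m) : (n:ℝ) = (2 * sa n m ^ 2 - sb n m ^ 2 + 2) / 3 := by
  rw [sa_sq hn hm, sb_sq hn hm]; ring

lemma mcast (hn : 2 ≤ n) (hm : 2 ≤ m) : (m:ℝ) = (2 * sb n m ^ 2 - sa n m ^ 2 + 2) / 3 := by
  rw [sa_sq hn hm, sb_sq hn hm]; ring

end Facts

section Mats
variable (n m : ℕ) [NeZero n] [NeZero m]

noncomputable def P11 : Matrix (Fin n) (Fin n) ℝ :=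
  of fun i j => if j = 0 then sa n m else if i = j then 1 else 0
noncomputable def P12 : Matrix (Fin n) (Fin m) ℝ :=
  of fun _ j => if j = 0 then m * sb n m else 0
noncomputable def P21 : Matrix (Fin m) (Fin n) ℝ :=
  of fun _ j => if j = 0 then sb n m else 0
noncomputable def P22 : Matrix (Fin m) (Fin m) ℝ :=
  of fun i j => if j = 0 then -((n:ℝ) * sa n m) else if i = j then 1 else 0

noncomputable def Q11 : Matrix (Fin n) (Fin n) ℝ :=
  of fun i j => if i = 0 then (if j = 0 then n * sa n m / Sv n m else 0)
    else if j = i then 1 else if j = 0 then -1 else 0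
noncomputable def Q12 : Matrix (Fin n) (Fin m) ℝ :=
  of fun i j => if i = 0 then (if j = 0 then m * sb n m / Sv n m else 0) else 0
noncomputable def Q21 : Matrix (Fin m) (Fin n) ℝ :=
  of fun i j => if i = 0 then (if j = 0 then sb n m / Sv n m else 0) else 0
noncomputable def Q22 : Matrix (Fin m) (Fin m) ℝ :=
  of fun i j => if i = 0 then (if j = 0 then -(sa n m / Sv n m) else 0)
    else if j = i then 1 else if j = 0 then -1 else 0

noncomputable def M11 : Matrix (Fin n) (Fin n) ℝ := of fun i j => if i = j then 1 else -(av n m)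
noncomputable def M12 : Matrix (Fin n) (Fin m) ℝ := of fun _ _ => -(cv n m)
noncomputable def M21 : Matrix (Fin m) (Fin n) ℝ := of fun _ _ => -(cv n m)
noncomputable def M22 : Matrix (Fin m) (Fin m) ℝ := of fun i j => if i = j then 1 else -(bv n m)

noncomputable def T11 : Matrix (Fin n) (Fin n) ℝ :=
  of fun i j => if j = 0 then 0 else if i = 0 then tuA n m else if i = j then 1 + av n m else 0
noncomputable def T12 : Matrix (Fin n) (Fin m) ℝ :=
  of fun i j => if j = 0 then 0 else if i = 0 then tuB n m else 0
noncomputable def T21 : Matrix (Fin m) (Fin n) ℝ :=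
  of fun i j => if j = 0 then 0 else if i = 0 then twA n m else 0
noncomputable def T22 : Matrix (Fin m) (Fin m) ℝ :=
  of fun i j => if j = 0 then (if i = 0 then lam n m else 0)
    else if i = 0 then twB n m else if i = j then 1 + bv n m else 0

end Mats

section Blocks
variable {n m : ℕ} [NeZero n] [NeZero m]

lemma QP11 (hn : 2 ≤ n) (hm : 2 ≤ m) : Q11 n m * P11 n m + Q12 n m * P21 n m = 1 := by
  have hS := hS_ne hn hm
  have hsa := (sa_pos hn hm).ne'
  have hsb := (sb_pos hn hm).ne'
  ext i k
  simp only [Matrix.add_apply, Matrix.mul_apply, Q11, Q12, P11, P21, Matrix.of_apply,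
    Matrix.one_apply]
  rcases eq_or_ne i 0 with rfl | hi <;> rcases eq_or_ne k 0 with rfl | hk
  · simp [sum_one, Sv]
    field_simp
    rw [div_eq_one_iff_eq (by convert hS using 2; ring)]
    rw [ncast hn hm, mcast hn hm]
    ring
  · simp [sum_one, Ne.symm hk, hk]
  · simp [sum_two _ hi, sum_two_bare _ hi, hi, Ne.symm hi]
  · simp [sum_two _ hi, sum_two_bare _ hi, hi, hk, Ne.symm hk, eq_comm]

lemma QP12 (hn : 2 ≤ n) (hm : 2 ≤ m) : Q11 n m * P12 n m + Q12 n m * P22 n m = 0 := by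
  have hS := hS_ne hn hm
  ext i k
  simp only [Matrix.add_apply, Matrix.mul_apply, Q11, Q12, P12, P22, Matrix.of_apply,
    Matrix.zero_apply]
  rcases eq_or_ne i 0 with rfl | hi <;> rcases eq_or_ne k 0 with rfl | hk
  · simp [sum_one]
    ring
  · simp [sum_one, Ne.symm hk, hk]
  · simp [sum_two _ hi, sum_two_bare _ hi, hi]
  · simp [sum_two _ hi, sum_two_bare _ hi, hi, hk, Ne.symm hk]

lemma QP21 (hn : 2 ≤ n) (hm : 2 ≤ m) : Q21 n m * P11 n m + Q22 n m * P21 n m = 0 := by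
  have hS := hS_ne hn hm
  ext i k
  simp only [Matrix.add_apply, Matrix.mul_apply, Q21, Q22, P11, P21, Matrix.of_apply,
    Matrix.zero_apply]
  rcases eq_or_ne i 0 with rfl | hi <;> rcases eq_or_ne k 0 with rfl | hk
  · simp [sum_one]
    ring
  · simp [sum_one, Ne.symm hk, hk]
  · simp [sum_two _ hi, sum_two_bare _ hi, hi]
  · simp [sum_two _ hi, sum_two_bare _ hi, hi, hk, Ne.symm hk]

lemma QP22 (hn : 2 ≤ n) (hm : 2 ≤ m) : Q21 n m * P12 n m + Q22 n m * P22 n m = 1 := by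
  have hS := hS_ne hn hm
  ext i k
  simp only [Matrix.add_apply, Matrix.mul_apply, Q21, Q22, P12, P22, Matrix.of_apply,
    Matrix.one_apply]
  rcases eq_or_ne i 0 with rfl | hi <;> rcases eq_or_ne k 0 with rfl | hk
  · simp [sum_one, Sv]
    field_simp
    rw [div_eq_one_iff_eq (by convert hS using 2; ring)]
    rw [ncast hn hm, mcast hn hm]
    ring
  · simp [sum_one, Ne.symm hk, hk]
  · simp [sum_two _ hi, sum_two_bare _ hi, hi, Ne.symm hi]
  · simp [sum_two _ hi, sum_two_bare _ hi, hi, hk, Ne.symm hk, eq_comm]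

lemma MP11 (hn : 2 ≤ n) (hm : 2 ≤ m) :
    M11 n m * P11 n m + M12 n m * P21 n m = P11 n m * T11 n m + P12 n m * T21 n m := by
  have hS := hS_ne hn hm
  have hsa := (sa_pos hn hm).ne'
  have hsb := (sb_pos hn hm).ne'
  have hA := (hA_pos hn hm).ne'
  have hB := (hB_pos hn hm).ne'
  ext i k
  simp only [Matrix.add_apply, Matrix.mul_apply, M11, M12, P11, P12, P21, T11, T21,
    Matrix.of_apply]
  rw [← Finset.mul_sum, sum_rowM, sum_colP, sum_one]
  simp only [sum_ite_const, sum_ite_const']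
  simp only [tuA, twA, tuB, twB, lam, av, bv, cv, Sv]
  split_ifs <;>
    (try (exfalso; simp_all [Fin.ext_iff, -Fin.val_eq_zero_iff] <;> omega)) <;>
    (try field_simp [hS, hsa, hsb, hA, hB]) <;>
    (try rw [ncast hn hm]) <;> (try rw [mcast hn hm]) <;> ring

lemma MP12 (hn : 2 ≤ n) (hm : 2 ≤ m) :
    M11 n m * P12 n m + M12 n m * P22 n m = P11 n m * T12 n m + P12 n m * T22 n m := by
  have hS := hS_ne hn hm
  have hsa := (sa_pos hn hm).ne'
  have hsb := (sb_pos hn hm).ne'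
  have hA := (hA_pos hn hm).ne'
  have hB := (hB_pos hn hm).ne'
  ext i k
  simp only [Matrix.add_apply, Matrix.mul_apply, M11, M12, P11, P12, P22, T12, T22,
    Matrix.of_apply]
  rw [← Finset.mul_sum, sum_rowM, sum_colP, sum_one]
  simp only [sum_ite_const, sum_ite_const']
  simp only [tuA, twA, tuB, twB, lam, av, bv, cv, Sv]
  split_ifs <;>
    (try (exfalso; simp_all [Fin.ext_iff, -Fin.val_eq_zero_iff] <;> omega)) <;>
    (try field_simp [hS, hsa, hsb, hA, hB]) <;>
    (try rw [ncast hn hm]) <;> (try rw [mcast hn hm]) <;> ring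

lemma MP21 (hn : 2 ≤ n) (hm : 2 ≤ m) :
    M21 n m * P11 n m + M22 n m * P21 n m = P21 n m * T11 n m + P22 n m * T21 n m := by
  have hS := hS_ne hn hm
  have hsa := (sa_pos hn hm).ne'
  have hsb := (sb_pos hn hm).ne'
  have hA := (hA_pos hn hm).ne'
  have hB := (hB_pos hn hm).ne'
  ext i k
  simp only [Matrix.add_apply, Matrix.mul_apply, M21, M22, P11, P21, P22, T11, T21,
    Matrix.of_apply]
  rw [← Finset.mul_sum, sum_rowM, sum_colP, sum_one]
  simp only [sum_ite_const, sum_ite_const']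
  simp only [tuA, twA, tuB, twB, lam, av, bv, cv, Sv]
  split_ifs <;>
    (try (exfalso; simp_all [Fin.ext_iff, -Fin.val_eq_zero_iff] <;> omega)) <;>
    (try field_simp [hS, hsa, hsb, hA, hB]) <;>
    (try rw [ncast hn hm]) <;> (try rw [mcast hn hm]) <;> ring

lemma MP22 (hn : 2 ≤ n) (hm : 2 ≤ m) :
    M21 n m * P12 n m + M22 n m * P22 n m = P21 n m * T12 n m + P22 n m * T22 n m := by
  have hS := hS_ne hn hm
  have hsa := (sa_pos hn hm).ne'
  have hsb := (sb_pos hn hm).ne'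
  have hA := (hA_pos hn hm).ne'
  have hB := (hB_pos hn hm).ne'
  ext i k
  simp only [Matrix.add_apply, Matrix.mul_apply, M21, M22, P12, P21, P22, T12, T22,
    Matrix.of_apply]
  rw [← Finset.mul_sum, sum_rowM, sum_colP, sum_one]
  simp only [sum_ite_const, sum_ite_const']
  simp only [tuA, twA, tuB, twB, lam, av, bv, cv, Sv]
  split_ifs <;>
    (try (exfalso; simp_all [Fin.ext_iff, -Fin.val_eq_zero_iff] <;> omega)) <;>
    (try field_simp [hS, hsa, hsb, hA, hB, (show (n:ℝ) + m * 2 - 2 ≠ 0 by intro h; apply hB; linarith),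
      (show (n:ℝ) * 2 + m - 2 ≠ 0 by intro h; apply hA; linarith)]) <;>
    (try rw [ncast hn hm]) <;> (try rw [mcast hn hm]) <;> ring

end Blocks



lemma charpoly_of_tri {ι : Type*} [Fintype ι] [DecidableEq ι] (T : Matrix ι ι ℝ) (b : ι → ℕ)
    (hinj : Function.Injective b) (htri : T.BlockTriangular b) :
    T.charpoly = ∏ i, (X - C (T i i)) := by
  rw [Matrix.charpoly, htri.charmatrix.det]
  rw [show (univ : Finset ι).image b = univ.image b from rfl]
  rw [Finset.prod_image (fun x _ y _ h => hinj h)]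
  refine Finset.prod_congr rfl fun i _ => ?_
  letI : Unique {j // b j = b i} := ⟨⟨⟨i, rfl⟩⟩, fun j => Subtype.ext (hinj j.2)⟩
  rw [Matrix.det_unique]
  show (charmatrix T) i i = _
  rw [charmatrix_apply_eq]

lemma charpoly_conj {ι : Type*} [Fintype ι] [DecidableEq ι] (M P Q T : Matrix ι ι ℝ)
    (hQP : Q * P = 1) (hMP : M * P = P * T) : M.charpoly = T.charpoly := by
  have hT : T = Q * M * P := by
    rw [mul_assoc, hMP, ← mul_assoc, hQP, one_mul]
  have hmapQP : Q.map (C : ℝ →+* ℝ[X]) * P.map (C : ℝ →+* ℝ[X]) = 1 := by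
    rw [← Matrix.map_mul, hQP]
    simp
  have key : charmatrix T = Q.map (C : ℝ →+* ℝ[X]) * charmatrix M * P.map (C : ℝ →+* ℝ[X]) := by
    rw [hT]
    show Matrix.scalar ι (X : ℝ[X]) - (C : ℝ →+* ℝ[X]).mapMatrix (Q * M * P)
        = Q.map (C : ℝ →+* ℝ[X]) * (Matrix.scalar ι (X : ℝ[X]) - (C : ℝ →+* ℝ[X]).mapMatrix M)
          * P.map (C : ℝ →+* ℝ[X])
    rw [mul_sub, sub_mul]
    congr 1
    · rw [← (Matrix.scalar_commute (X : ℝ[X]) (fun r => Commute.all _ _)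
        (Q.map (C : ℝ →+* ℝ[X])))]
      rw [mul_assoc, hmapQP, mul_one]
    · simp only [RingHom.mapMatrix_apply]
      rw [Matrix.map_mul, Matrix.map_mul]
  rw [Matrix.charpoly, Matrix.charpoly, key, det_mul, det_mul, mul_right_comm]
  have h2 : (Q.map (C : ℝ →+* ℝ[X])).det * (P.map (C : ℝ →+* ℝ[X])).det = 1 := by
    rw [← det_mul, hmapQP, det_one]
  rw [h2, one_mul]


def fidx (n m : ℕ) : Fin n ⊕ Fin m → ℕ
  | Sum.inl i => if (i : ℕ) = 0 then 0 else 2 + i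
  | Sum.inr j => if (j : ℕ) = 0 then 1 else 2 + n + j

lemma fidx_inj (n m : ℕ) : Function.Injective (fidx n m) := by
  rintro (i | i) (j | j) h <;> simp only [fidx] at h
  · have h1 := i.isLt; have h2 := j.isLt
    congr 1; apply Fin.ext; split_ifs at h <;> omega
  · exfalso; have h1 := i.isLt; have h2 := j.isLt; split_ifs at h <;> omega
  · exfalso; have h1 := i.isLt; have h2 := j.isLt; split_ifs at h <;> omega
  · have h1 := i.isLt; have h2 := j.isLt
    congr 1; apply Fin.ext; split_ifs at h <;> omega

section Tri
variable (n m : ℕ) [NeZero n] [NeZero m]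

lemma tri : (fromBlocks (T11 n m) (T12 n m) (T21 n m) (T22 n m)).BlockTriangular (fidx n m) := by
  rintro (i | i) (j | j) h <;> simp only [fidx] at h
  · have key : (j : ℕ) = 0 ∨ ((i : ℕ) ≠ 0 ∧ (i : ℕ) ≠ (j : ℕ)) := by
      split_ifs at h <;> omega
    rcases key with hj | ⟨hi, hij⟩
    · have : j = 0 := by apply Fin.ext; simp [hj]
      subst this
      simp [T11]
    · have hi' : i ≠ 0 := fun e => hi (by rw [e]; simp)
      have hij' : i ≠ j := fun e => hij (by rw [e])
      simp [fromBlocks_apply₁₁, T11, hi', hij', ite_self]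
  · have key : (i : ℕ) ≠ 0 := by split_ifs at h <;> omega
    have hi' : i ≠ 0 := fun e => key (by rw [e]; simp)
    simp [fromBlocks_apply₁₂, T12, hi', ite_self]
  · have key : (j : ℕ) = 0 ∨ (i : ℕ) ≠ 0 := by split_ifs at h <;> omega
    rcases key with hj | hi
    · have : j = 0 := by apply Fin.ext; simp [hj]
      subst this
      simp [T21]
    · have hi' : i ≠ 0 := fun e => hi (by rw [e]; simp)
      simp [fromBlocks_apply₂₁, T21, hi', ite_self]
  · have key : (i : ℕ) ≠ 0 ∧ (i : ℕ) ≠ (j : ℕ) := by split_ifs at h <;> omega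
    have hi' : i ≠ 0 := fun e => key.1 (by rw [e]; simp)
    have hij' : i ≠ j := fun e => key.2 (by rw [e])
    simp [fromBlocks_apply₂₂, T22, hi', hij', ite_self]

end Tri

lemma prod_ite_fin {N : ℕ} [NeZero N] (a b : Polynomial ℝ) :
    ∏ i : Fin N, (if i = 0 then a else b) = a * b ^ (N - 1) := by
  rw [← Finset.mul_prod_erase _ _ (Finset.mem_univ 0), if_pos rfl]
  congr 1
  rw [Finset.prod_congr rfl (fun j hj => if_neg (Finset.mem_erase.mp hj).1), Finset.prod_const,
    Finset.card_erase_of_mem (Finset.mem_univ 0), Finset.card_univ, Fintype.card_fin]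

end Stmt8Aux

open Stmt8Aux

theorem stmt8 {n m : ℕ} (hn : 2 ≤ n) (hm : 2 ≤ m)
    (M : Matrix (Fin n ⊕ Fin m) (Fin n ⊕ Fin m) ℝ)
    (hM : M = Matrix.of fun p q =>
      match p, q with
      | Sum.inl i, Sum.inl j =>
          if i = j then (1 : ℝ) else -2 / (2 * (n : ℝ) + m - 2)
      | Sum.inl _, Sum.inr _ =>
          -1 / Real.sqrt ((2 * (n : ℝ) + m - 2) * ((n : ℝ) + 2 * m - 2))
      | Sum.inr _, Sum.inl _ =>
          -1 / Real.sqrt ((2 * (n : ℝ) + m - 2) * ((n : ℝ) + 2 * m - 2))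
      | Sum.inr i, Sum.inr j =>
          if i = j then (1 : ℝ) else -2 / ((n : ℝ) + 2 * m - 2)) :
    M.charpoly = X
      * (X - C ((2 * (n : ℝ) + m) / (2 * (n : ℝ) + m - 2))) ^ (n - 1)
      * (X - C (((n : ℝ) + 2 * m) / ((n : ℝ) + 2 * m - 2))) ^ (m - 1)
      * (X - C (2 * ((n : ℝ) ^ 2 + (m : ℝ) ^ 2 + m * n - n - m) /
          ((2 * (n : ℝ) + m - 2) * ((n : ℝ) + 2 * m - 2)))) := by
  haveI : NeZero n := ⟨by omega⟩
  haveI : NeZero m := ⟨by omega⟩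
  have hA := (hA_pos hn hm).ne'
  have hB := (hB_pos hn hm).ne'
  have hMb : M = fromBlocks (M11 n m) (M12 n m) (M21 n m) (M22 n m) := by
    rw [hM]; ext p q
    rcases p with i | i <;> rcases q with j | j <;>
      simp [fromBlocks, M11, M12, M21, M22, av, bv, cv, sa, sb, neg_div,
        Real.sqrt_mul (hA_pos hn hm).le]
  have hQPb : (fromBlocks (Q11 n m) (Q12 n m) (Q21 n m) (Q22 n m)) *
      (fromBlocks (P11 n m) (P12 n m) (P21 n m) (P22 n m)) = 1 := by
    rw [fromBlocks_multiply, QP11 hn hm, QP12 hn hm, QP21 hn hm, QP22 hn hm, fromBlocks_one]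
  have hMPb : M * (fromBlocks (P11 n m) (P12 n m) (P21 n m) (P22 n m)) =
      (fromBlocks (P11 n m) (P12 n m) (P21 n m) (P22 n m)) *
        (fromBlocks (T11 n m) (T12 n m) (T21 n m) (T22 n m)) := by
    rw [hMb, fromBlocks_multiply, fromBlocks_multiply, MP11 hn hm, MP12 hn hm, MP21 hn hm,
      MP22 hn hm]
  have hcp := charpoly_conj M _ _ _ hQPb hMPb
  rw [hcp, charpoly_of_tri _ (fidx n m) (fidx_inj n m) (tri n m), Fintype.prod_sum_type]
  have e1 : ∀ i : Fin n, (X - C ((fromBlocks (T11 n m) (T12 n m) (T21 n m) (T22 n m))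
      (Sum.inl i) (Sum.inl i))) = if i = 0 then X else (X - C (1 + av n m)) := by
    intro i
    rcases eq_or_ne i 0 with rfl | hi
    · simp [T11]
    · simp [T11, hi]
  have e2 : ∀ j : Fin m, (X - C ((fromBlocks (T11 n m) (T12 n m) (T21 n m) (T22 n m))
      (Sum.inr j) (Sum.inr j))) = if j = 0 then (X - C (lam n m)) else (X - C (1 + bv n m)) := by
    intro j
    rcases eq_or_ne j 0 with rfl | hj
    · simp [T22]
    · simp [T22, hj]
  rw [Finset.prod_congr rfl (fun i _ => e1 i), Finset.prod_congr rfl (fun j _ => e2 j),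
    prod_ite_fin, prod_ite_fin]
  have h1 : (1 : ℝ) + av n m = (2 * (n : ℝ) + m) / (2 * (n : ℝ) + m - 2) := by
    unfold av; field_simp; ring
  have h2 : (1 : ℝ) + bv n m = ((n : ℝ) + 2 * m) / ((n : ℝ) + 2 * m - 2) := by
    unfold bv; field_simp; ring
  have h3 : lam n m = 2 * ((n : ℝ) ^ 2 + (m : ℝ) ^ 2 + m * n - n - m) /
      ((2 * (n : ℝ) + m - 2) * ((n : ℝ) + 2 * m - 2)) := by
    unfold lam av bv; field_simp; ring
  rw [h1, h2, h3]
  ring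
end

section
/- The normalized distance Laplacian spectrum of K_n minus one edge is {0, (n²-n+2)/(n(n-1)), n/(n-1) with multiplicity n-3, (n+2)/n}. -/
open Matrix Polynomial

private lemma filter_le1_card {n : ℕ} (hn : 2 ≤ n) :
    (Finset.univ.filter (fun i : Fin n => (i : ℕ) ≤ 1)).card = 2 := by
  have : (Finset.univ.filter (fun i : Fin n => (i : ℕ) ≤ 1)) =
      {(⟨0, by omega⟩ : Fin n), ⟨1, by omega⟩} := by
    ext i
    simp [Fin.ext_iff]
    omega
  rw [this, Finset.card_insert_of_notMem (by simp [Fin.ext_iff]), Finset.card_singleton]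

private lemma filter_not_le1_card {n : ℕ} (hn : 2 ≤ n) :
    (Finset.univ.filter (fun i : Fin n => ¬ (i : ℕ) ≤ 1)).card = n - 2 := by
  have h := Finset.card_filter_add_card_filter_not (s := (Finset.univ : Finset (Fin n)))
    (p := fun i : Fin n => (i : ℕ) ≤ 1)
  rw [filter_le1_card hn] at h
  simp only [Finset.card_univ, Fintype.card_fin] at h
  omega

private lemma sum_split {K : Type*} [CommRing K] {n : ℕ} (hn : 2 ≤ n) (s t : K) :
    (∑ i : Fin n, if (i : ℕ) ≤ 1 then s else t) = 2 * s + ((n - 2 : ℕ) : K) * t := by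
  rw [Finset.sum_ite, Finset.sum_const, Finset.sum_const, filter_le1_card hn,
    filter_not_le1_card hn, nsmul_eq_mul, nsmul_eq_mul, Nat.cast_ofNat]

private lemma prod_split {K : Type*} [CommRing K] {n : ℕ} (hn : 2 ≤ n) (s t : K) :
    (∏ i : Fin n, if (i : ℕ) ≤ 1 then s else t) = s ^ 2 * t ^ (n - 2) := by
  rw [Finset.prod_ite, Finset.prod_const, Finset.prod_const, filter_le1_card hn,
    filter_not_le1_card hn]

private lemma expand_lemma {K : Type*} [Field K] (du dw N M : K) (hdu : du ≠ 0) (hdw : dw ≠ 0) :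
    du ^ 2 * dw *
      ((1 + (2 * (du⁻¹ * N⁻¹) + (N - 2) * (dw⁻¹ * M⁻¹))) * (1 + 2 * (du⁻¹ * N⁻¹))
        - (2 * (du⁻¹ * N⁻¹)) * (2 * (du⁻¹ * N⁻¹)))
    = du * (du * dw + 4 * N⁻¹ * dw + (N - 2) * M⁻¹ * du + 2 * (N - 2) * N⁻¹ * M⁻¹) := by
  have h1 : du * du⁻¹ = 1 := mul_inv_cancel₀ hdu
  have h2 : dw * dw⁻¹ = 1 := mul_inv_cancel₀ hdw
  linear_combination (4 * N⁻¹ * du * dw + 2 * (N - 2) * N⁻¹ * M⁻¹ * du) * h1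
    + ((N - 2) * M⁻¹ * du ^ 2 + 2 * (N - 2) * N⁻¹ * M⁻¹ * du ^ 2 * du⁻¹) * h2

private lemma key2_lemma {K : Type*} [Field K] (x N : K) (hN : N ≠ 0) (hM : N - 1 ≠ 0) :
    (x - (N + 2) / N) * (x - N / (N - 1)) + 4 * N⁻¹ * (x - N / (N - 1))
      + (N - 2) * (N - 1)⁻¹ * (x - (N + 2) / N) + 2 * (N - 2) * N⁻¹ * (N - 1)⁻¹
    = x * (x - (N ^ 2 - N + 2) / (N * (N - 1))) := by
  field_simp
  ring

set_option maxHeartbeats 2000000 in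
theorem stmt10 {n : ℕ} (hn : 4 ≤ n)
    (M : Matrix (Fin n) (Fin n) ℝ)
    (hM : M = Matrix.of fun i j =>
      if i = j then (1 : ℝ)
      else if i.val ≤ 1 ∧ j.val ≤ 1 then -2 / (n : ℝ)
      else if i.val ≤ 1 ∨ j.val ≤ 1 then -1 / Real.sqrt ((n : ℝ) * ((n : ℝ) - 1))
      else -1 / ((n : ℝ) - 1)) :
    M.charpoly = X
      * (X - C (((n : ℝ) ^ 2 - n + 2) / ((n : ℝ) * ((n : ℝ) - 1))))
      * (X - C ((n : ℝ) / ((n : ℝ) - 1))) ^ (n - 3)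
      * (X - C (((n : ℝ) + 2) / (n : ℝ))) := by
  have hn4 : (4 : ℝ) ≤ (n : ℝ) := by exact_mod_cast hn
  have hn0 : (0 : ℝ) < (n : ℝ) := by linarith
  have hn1 : (0 : ℝ) < (n : ℝ) - 1 := by linarith
  have hsn : Real.sqrt (n : ℝ) * Real.sqrt (n : ℝ) = (n : ℝ) := Real.mul_self_sqrt hn0.le
  have hsn1 : Real.sqrt ((n : ℝ) - 1) * Real.sqrt ((n : ℝ) - 1) = (n : ℝ) - 1 :=
    Real.mul_self_sqrt hn1.le
  have hsn0 : Real.sqrt (n : ℝ) ≠ 0 := by positivity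
  have hsn10 : Real.sqrt ((n : ℝ) - 1) ≠ 0 := by positivity
  -- basic real products
  have e1 : 1 / Real.sqrt (n : ℝ) * (1 / Real.sqrt (n : ℝ)) = ((n : ℝ))⁻¹ := by
    rw [div_mul_div_comm, one_mul, hsn, one_div]
  have e2 : 1 / Real.sqrt ((n : ℝ) - 1) * (1 / Real.sqrt ((n : ℝ) - 1)) = ((n : ℝ) - 1)⁻¹ := by
    rw [div_mul_div_comm, one_mul, hsn1, one_div]
  have e3 : 1 / Real.sqrt (n : ℝ) * (1 / Real.sqrt ((n : ℝ) - 1))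
      = 1 / Real.sqrt ((n : ℝ) * ((n : ℝ) - 1)) := by
    rw [div_mul_div_comm, one_mul, ← Real.sqrt_mul hn0.le]
  set K := RatFunc ℝ with hK
  set φ : Polynomial ℝ →+* K := (algebraMap (Polynomial ℝ) K : Polynomial ℝ →+* K) with hφdef
  have hinj : Function.Injective φ := IsFractionRing.injective (Polynomial ℝ) K
  apply hinj
  show φ (charmatrix M).det = _
  rw [φ.map_det, RingHom.mapMatrix_apply]
  set ψ : ℝ →+* K := φ.comp (Polynomial.C : ℝ →+* Polynomial ℝ) with hψdef
  have hψinj : Function.Injective ψ := ψ.injective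
  have hCC : ∀ r : ℝ, φ (Polynomial.C r) = ψ r := fun r => rfl
  set x : K := φ X with hxdef
  set ν : ℝ := ((n : ℝ) + 2) / (n : ℝ) with hν
  set μ : ℝ := (n : ℝ) / ((n : ℝ) - 1) with hμ
  have hXC : ∀ r : ℝ, x - ψ r ≠ 0 := by
    intro r
    have : x - ψ r = φ (X - Polynomial.C r) := by rw [map_sub, hCC]
    rw [this]
    simp only [ne_eq, map_eq_zero_iff φ hinj]
    exact Polynomial.X_sub_C_ne_zero r
  -- real data
  set Wr : Matrix (Fin n) (Fin 2) ℝ := Matrix.of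
    (fun i a => if (i : ℕ) ≤ 1 then 1 / Real.sqrt (n : ℝ)
      else if a = 0 then 1 / Real.sqrt ((n : ℝ) - 1) else 0) with hWr
  set dr : Fin n → ℝ := fun i => if (i : ℕ) ≤ 1 then ν else μ with hdr
  have h10 : ((1 : Fin 2) = 0) = False := by simp
  have hreal : ∀ i j : Fin n,
      M i j = (if i = j then dr i else 0) - (Wr i 0 * Wr j 0 + Wr i 1 * Wr j 1) := by
    intro i j
    rw [hM]
    rcases eq_or_ne i j with rfl | hij
    · simp only [Matrix.of_apply, if_pos rfl, hWr, hdr]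
      by_cases h : (i : ℕ) ≤ 1
      · simp only [h, if_true, ite_true, e1, hν]
        field_simp
        ring
      · simp only [h, if_false, ite_false, h10, e2, hμ, mul_zero, ↓reduceIte, and_self, or_self]
        field_simp
        ring
    · simp only [Matrix.of_apply, if_neg hij, hWr, hdr, h10, ite_false]
      by_cases hi : (i : ℕ) ≤ 1 <;> by_cases hj : (j : ℕ) ≤ 1 <;>
        simp only [hi, hj, if_true, if_false, ite_true, ite_false, and_self, and_true, and_false,
          true_and, false_and, or_true, true_or, false_or, or_false, mul_zero, zero_mul, add_zero,
          e1, e2, e3, h10]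
      · field_simp
        ring
      · ring
      · rw [mul_comm (1 / Real.sqrt ((n : ℝ) - 1)) (1 / Real.sqrt (n : ℝ)), e3]
        ring
      · field_simp
        ring
  -- data over K
  set dfun : Fin n → K := fun i => if (i : ℕ) ≤ 1 then x - ψ ν else x - ψ μ with hd
  have hdne : ∀ i, dfun i ≠ 0 := by
    intro i
    by_cases h : (i : ℕ) ≤ 1 <;> simp only [hd, h, if_true, if_false, ite_true, ite_false] <;>
      exact hXC _
  set W : Matrix (Fin n) (Fin 2) K := Wr.map ψ with hW
  have hdfr : ∀ i, dfun i = x - ψ (dr i) := by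
    intro i
    by_cases h : (i : ℕ) ≤ 1 <;> simp [hd, hdr, h]
  -- Step A
  have hA : (charmatrix M).map φ = Matrix.diagonal dfun + W * Wᵀ := by
    ext i j
    rcases eq_or_ne i j with rfl | hij
    · rw [Matrix.map_apply, charmatrix_apply_eq, Matrix.add_apply, Matrix.diagonal_apply_eq,
        Matrix.mul_apply, Fin.sum_univ_two, Matrix.transpose_apply, Matrix.transpose_apply]
      simp only [hW, Matrix.map_apply]
      rw [map_sub, hCC, hdfr, ← _root_.map_mul, ← _root_.map_mul, ← _root_.map_add, sub_add,
        ← map_sub ψ]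
      show x - ψ (M i i) = _
      congr 1
      exact congrArg ψ (by rw [hreal i i, if_pos rfl])
    · rw [Matrix.map_apply, charmatrix_apply_ne _ _ _ hij, Matrix.add_apply,
        Matrix.diagonal_apply_ne _ hij, Matrix.mul_apply, Fin.sum_univ_two,
        Matrix.transpose_apply, Matrix.transpose_apply]
      simp only [hW, Matrix.map_apply]
      rw [map_neg, hCC, ← _root_.map_mul, ← _root_.map_mul, ← _root_.map_add, zero_add,
        ← map_neg ψ]
      exact congrArg ψ (by rw [hreal i j, if_neg hij]; ring)
  -- Step B : factor out the diagonal
  set E : Matrix (Fin n) (Fin n) K := Matrix.diagonal (fun i => (dfun i)⁻¹) with hE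
  have hDE : Matrix.diagonal dfun * E = 1 := by
    rw [hE, Matrix.diagonal_mul_diagonal]
    have : (fun i => dfun i * (dfun i)⁻¹) = fun _ : Fin n => (1 : K) := by
      funext i; exact mul_inv_cancel₀ (hdne i)
    rw [this, Matrix.diagonal_one]
  have hfact : Matrix.diagonal dfun + W * Wᵀ = Matrix.diagonal dfun * (1 + E * W * Wᵀ) := by
    rw [Matrix.mul_add, Matrix.mul_one, ← Matrix.mul_assoc, ← Matrix.mul_assoc, hDE,
      Matrix.one_mul]
  rw [hA, hfact, Matrix.det_mul, Matrix.det_one_add_mul_comm, Matrix.det_diagonal]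
  -- abbreviations
  set du : K := x - ψ ν with hdu
  set dw : K := x - ψ μ with hdw
  set u : K := ψ (1 / Real.sqrt (n : ℝ)) with hu
  set vv : K := ψ (1 / Real.sqrt ((n : ℝ) - 1)) with hvv
  have hG : ∀ a b : Fin 2, (Wᵀ * (E * W)) a b
      = 2 * (u * (du⁻¹ * u))
        + ((n - 2 : ℕ) : K) * ((if a = 0 then vv else 0) * (dw⁻¹ * (if b = 0 then vv else 0))) := by
    intro a b
    rw [Matrix.mul_apply]
    have key : ∀ i : Fin n, Wᵀ a i * (E * W) i b
        = (if (i : ℕ) ≤ 1 then u * (du⁻¹ * u)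
          else (if a = 0 then vv else 0) * (dw⁻¹ * (if b = 0 then vv else 0))) := by
      intro i
      rw [Matrix.transpose_apply, hE, Matrix.diagonal_mul]
      by_cases h : (i : ℕ) ≤ 1
      · simp only [hW, Matrix.map_apply, hWr, Matrix.of_apply, hd, h, if_true, ite_true]
        rfl
      · simp only [hW, Matrix.map_apply, hWr, Matrix.of_apply, hd, h, if_false, ite_false,
          apply_ite ψ, map_zero]
        rfl
    rw [Finset.sum_congr rfl (fun i _ => key i), sum_split (by omega)]
  have hprod : (∏ i, dfun i) = du ^ 2 * dw ^ (n - 2) := by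
    rw [hd]
    exact prod_split (by omega) _ _
  have hdet2 : (1 + Wᵀ * (E * W)).det
      = (1 + (Wᵀ * (E * W)) 0 0) * (1 + (Wᵀ * (E * W)) 1 1)
        - (Wᵀ * (E * W)) 0 1 * (Wᵀ * (E * W)) 1 0 := by
    rw [Matrix.det_fin_two]
    simp [Matrix.add_apply, Matrix.one_apply]
  -- constants over K
  have hnc : ψ ((n : ℕ) : ℝ) = ((n : ℕ) : K) := map_natCast ψ n
  have huu : u * u = ((n : K))⁻¹ := by
    rw [hu, ← _root_.map_mul, e1, map_inv₀, hnc]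
  have hvv2 : vv * vv = ((n : K) - 1)⁻¹ := by
    rw [hvv, ← _root_.map_mul, e2, map_inv₀, map_sub, _root_.map_one, hnc]
  have hψν : ψ ν = ((n : K) + 2) / (n : K) := by
    rw [hν, map_div₀, map_add, hnc, map_ofNat]
  have hψμ : ψ μ = (n : K) / ((n : K) - 1) := by
    rw [hμ, map_div₀, map_sub, _root_.map_one, hnc]
  have hψlam : ψ (((n : ℝ) ^ 2 - (n : ℝ) + 2) / ((n : ℝ) * ((n : ℝ) - 1)))
      = ((n : K) ^ 2 - (n : K) + 2) / ((n : K) * ((n : K) - 1)) := by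
    rw [map_div₀, map_add, map_sub, map_pow, hnc, map_ofNat, _root_.map_mul, map_sub, _root_.map_one, hnc]
  have hψne : ∀ r : ℝ, r ≠ 0 → ψ r ≠ 0 := by
    intro r hr h
    exact hr (hψinj (by rw [h, map_zero]))
  have hnK : ((n : ℕ) : K) ≠ 0 := by
    rw [← hnc]; exact hψne _ hn0.ne'
  have hn1K : ((n : ℕ) : K) - 1 ≠ 0 := by
    rw [← _root_.map_one ψ, ← hnc, ← map_sub]; exact hψne _ hn1.ne'
  have hduK : du ≠ 0 := hXC ν
  have hdwK : dw ≠ 0 := hXC μ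
  have hc2 : ((n - 2 : ℕ) : K) = (n : K) - 2 := by
    have : (2 : ℕ) ≤ n := by omega
    push_cast [this]
    ring
  -- rewrite the goal
  rw [hprod, hdet2, hG 0 0, hG 0 1, hG 1 0, hG 1 1]
  simp only [ite_true, ite_false, if_true, if_false, mul_zero, zero_mul, add_zero,
    Fin.one_eq_zero_iff, Nat.succ_ne_self, OfNat.ofNat_ne_one, if_neg (by decide : ¬ (1 : Fin 2) = 0)]
  have hq1 : u * (du⁻¹ * u) = du⁻¹ * ((n : K))⁻¹ := by rw [← huu]; ring
  have hq2 : vv * (dw⁻¹ * vv) = dw⁻¹ * ((n : K) - 1)⁻¹ := by rw [← hvv2]; ring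
  rw [hq1, hq2, hc2]
  -- right-hand side
  rw [_root_.map_mul, _root_.map_mul, _root_.map_mul, map_pow, map_sub, map_sub, map_sub, hCC, hCC, hCC, ← hxdef,
    hψlam, ← hdw, ← hdu]
  have hdu' : du = x - ((n : K) + 2) / (n : K) := by rw [hdu, hψν]
  have hdw' : dw = x - (n : K) / ((n : K) - 1) := by rw [hdw, hψμ]
  have key : du ^ 2 * dw *
      ((1 + (2 * (du⁻¹ * ((n : K))⁻¹) + ((n : K) - 2) * (dw⁻¹ * ((n : K) - 1)⁻¹)))
        * (1 + 2 * (du⁻¹ * ((n : K))⁻¹))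
        - (2 * (du⁻¹ * ((n : K))⁻¹)) * (2 * (du⁻¹ * ((n : K))⁻¹)))
      = x * (x - ((n : K) ^ 2 - (n : K) + 2) / ((n : K) * ((n : K) - 1))) * du := by
    rw [expand_lemma du dw ((n : K)) ((n : K) - 1) hduK hdwK, hdu', hdw',
      key2_lemma x ((n : K)) hnK hn1K]
    ring
  have hpow : dw ^ (n - 2) = dw ^ (n - 3) * dw := by
    rw [← pow_succ]
    congr 1
    omega
  calc du ^ 2 * dw ^ (n - 2) *
        ((1 + (2 * (du⁻¹ * ((n : K))⁻¹) + ((n : K) - 2) * (dw⁻¹ * ((n : K) - 1)⁻¹)))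
          * (1 + 2 * (du⁻¹ * ((n : K))⁻¹))
          - (2 * (du⁻¹ * ((n : K))⁻¹)) * (2 * (du⁻¹ * ((n : K))⁻¹)))
      = dw ^ (n - 3) * (du ^ 2 * dw *
        ((1 + (2 * (du⁻¹ * ((n : K))⁻¹) + ((n : K) - 2) * (dw⁻¹ * ((n : K) - 1)⁻¹)))
          * (1 + 2 * (du⁻¹ * ((n : K))⁻¹))
          - (2 * (du⁻¹ * ((n : K))⁻¹)) * (2 * (du⁻¹ * ((n : K))⁻¹)))) := by
        rw [hpow]; ring
    _ = dw ^ (n - 3) * (x * (x - ((n : K) ^ 2 - (n : K) + 2) / ((n : K) * ((n : K) - 1))) * du) := by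
        rw [key]
    _ = x * (x - ((n : K) ^ 2 - (n : K) + 2) / ((n : K) * ((n : K) - 1))) * dw ^ (n - 3) * du := by
        ring
end

section
/- If two connected graphs G and H on the same number of vertices satisfy φ^D(λ,r,G) = φ^D(λ,r,H) identically, then G and H are cospectral with respect to the distance matrix, the distance Laplacian, the signless distance Laplacian, and the normalized distance Laplacian, and they have the same multiset of vertex transmissions. -/
open Matrix Polynomial

lemma evalCharpoly {n : ℕ} (M : Matrix (Fin n) (Fin n) ℝ) (x : ℝ) :
    M.charpoly.eval x = (x • (1 : Matrix (Fin n) (Fin n) ℝ) - M).det := by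
  rw [Matrix.charpoly, Polynomial.eval, ← Polynomial.coe_eval₂RingHom, RingHom.map_det]
  congr 1
  ext i j
  by_cases hij : i = j <;>
    simp [Matrix.charmatrix_apply, hij, Matrix.one_apply, Matrix.diagonal_apply]

lemma evalDetSmul {n : ℕ} (A B : Matrix (Fin n) (Fin n) ℝ) (r : ℝ) :
    Polynomial.eval r (((X : ℝ[X]) • A.map C - B.map C).det) = (r • A - B).det := by
  rw [Polynomial.eval, ← Polynomial.coe_eval₂RingHom, RingHom.map_det]
  congr 1
  ext i j
  simp [Matrix.map_apply]
  ring

lemma coeffDetSmul {n : ℕ} (A B : Matrix (Fin n) (Fin n) ℝ) (hA : IsUnit A.det) :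
    (((X : ℝ[X]) • A.map C - B.map C).det).coeff n = A.det := by
  have key : ((X : ℝ[X]) • A.map C - B.map C) = A.map C * Matrix.charmatrix (A⁻¹ * B) := by
    rw [Matrix.charmatrix, mul_sub]
    congr 1
    · rw [Matrix.scalar_apply, ← Matrix.smul_one_eq_diagonal, mul_smul_comm, mul_one]
    · rw [RingHom.mapMatrix_apply, ← Matrix.map_mul, ← Matrix.mul_assoc,
        Matrix.mul_nonsing_inv _ hA, Matrix.one_mul]
  rw [key, Matrix.det_mul, ← RingHom.mapMatrix_apply, ← RingHom.map_det, ← Matrix.charpoly, Polynomial.coeff_C_mul]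
  have h1 : (A⁻¹ * B).charpoly.coeff n = 1 := by
    have := (Matrix.charpoly_monic (A⁻¹ * B)).coeff_natDegree
    rwa [Matrix.charpoly_natDegree_eq_dim, Fintype.card_fin] at this
  rw [h1, mul_one]

theorem stmt13 {n : ℕ} (G H : SimpleGraph (Fin n)) (hGc : G.Connected) (hHc : H.Connected)
    (DG DH : Matrix (Fin n) (Fin n) ℝ)
    (hDG : DG = Matrix.of fun i j => (G.dist i j : ℝ))
    (hDH : DH = Matrix.of fun i j => (H.dist i j : ℝ))
    (tG tH : Fin n → ℝ)
    (htG : tG = fun i => ∑ j, (G.dist i j : ℝ))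
    (htH : tH = fun i => ∑ j, (H.dist i j : ℝ))
    (h : ∀ lam r : ℝ,
      (lam • (1 : Matrix (Fin n) (Fin n) ℝ) - DG + r • Matrix.diagonal tG).det
        = (lam • (1 : Matrix (Fin n) (Fin n) ℝ) - DH + r • Matrix.diagonal tH).det) :
    DG.charpoly = DH.charpoly ∧
    (Matrix.diagonal tG - DG).charpoly = (Matrix.diagonal tH - DH).charpoly ∧
    (Matrix.diagonal tG + DG).charpoly = (Matrix.diagonal tH + DH).charpoly ∧
    ((Matrix.diagonal fun i => 1 / Real.sqrt (tG i)) * (Matrix.diagonal tG - DG) *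
        (Matrix.diagonal fun i => 1 / Real.sqrt (tG i))).charpoly
      = ((Matrix.diagonal fun i => 1 / Real.sqrt (tH i)) * (Matrix.diagonal tH - DH) *
        (Matrix.diagonal fun i => 1 / Real.sqrt (tH i))).charpoly ∧
    Finset.univ.val.map tG = Finset.univ.val.map tH := by
  by_cases hn : n ≤ 1
  · haveI : Subsingleton (Fin n) := by
      rwa [Fin.subsingleton_iff_le_one]
    have hD : DG = DH := by
      rw [hDG, hDH]; ext i j
      have hij : i = j := Subsingleton.elim i j
      subst hij; simp [SimpleGraph.dist_self]
    have ht : tG = tH := by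
      rw [htG, htH]; funext i
      refine Finset.sum_congr rfl fun j _ => ?_
      rw [Subsingleton.elim j i]; simp [SimpleGraph.dist_self]
    rw [hD, ht]
    exact ⟨rfl, rfl, rfl, rfl, rfl⟩
  · push_neg at hn
    haveI : Nontrivial (Fin n) := Fintype.one_lt_card_iff_nontrivial.mp (by simpa using hn)
    have htGpos : ∀ i, 0 < tG i := by
      intro i
      obtain ⟨j, hj⟩ := exists_ne i
      rw [htG]
      refine Finset.sum_pos' (fun k _ => by positivity) ⟨j, Finset.mem_univ j, ?_⟩
      exact_mod_cast hGc.pos_dist_of_ne hj.symm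
    have htHpos : ∀ i, 0 < tH i := by
      intro i
      obtain ⟨j, hj⟩ := exists_ne i
      rw [htH]
      refine Finset.sum_pos' (fun k _ => by positivity) ⟨j, Finset.mem_univ j, ?_⟩
      exact_mod_cast hHc.pos_dist_of_ne hj.symm
    -- part 1
    have h1 : DG.charpoly = DH.charpoly := by
      apply Polynomial.funext; intro x
      rw [evalCharpoly, evalCharpoly]
      have := h x 0
      simpa using this
    -- part 2
    have h2 : (Matrix.diagonal tG - DG).charpoly = (Matrix.diagonal tH - DH).charpoly := by
      apply Polynomial.funext; intro x
      rw [evalCharpoly, evalCharpoly]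
      have e1 : x • (1 : Matrix (Fin n) (Fin n) ℝ) - (Matrix.diagonal tG - DG)
          = -((-x) • (1 : Matrix (Fin n) (Fin n) ℝ) - DG + (1:ℝ) • Matrix.diagonal tG) := by
        simp only [neg_smul, one_smul]; abel
      have e2 : x • (1 : Matrix (Fin n) (Fin n) ℝ) - (Matrix.diagonal tH - DH)
          = -((-x) • (1 : Matrix (Fin n) (Fin n) ℝ) - DH + (1:ℝ) • Matrix.diagonal tH) := by
        simp only [neg_smul, one_smul]; abel
      rw [e1, e2, Matrix.det_neg, Matrix.det_neg, h (-x) 1]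
    -- part 3
    have h3 : (Matrix.diagonal tG + DG).charpoly = (Matrix.diagonal tH + DH).charpoly := by
      apply Polynomial.funext; intro x
      rw [evalCharpoly, evalCharpoly]
      have e1 : x • (1 : Matrix (Fin n) (Fin n) ℝ) - (Matrix.diagonal tG + DG)
          = x • (1 : Matrix (Fin n) (Fin n) ℝ) - DG + (-1:ℝ) • Matrix.diagonal tG := by
        simp only [neg_smul, one_smul]; abel
      have e2 : x • (1 : Matrix (Fin n) (Fin n) ℝ) - (Matrix.diagonal tH + DH)
          = x • (1 : Matrix (Fin n) (Fin n) ℝ) - DH + (-1:ℝ) • Matrix.diagonal tH := by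
        simp only [neg_smul, one_smul]; abel
      rw [e1, e2, h x (-1)]
    -- products with shift
    have hprod : ∀ s : ℝ, 0 < s → ∏ i, (s + tG i) = ∏ i, (s + tH i) := by
      intro s hs
      have hAGu : IsUnit (Matrix.diagonal fun i => s + tG i).det := by
        rw [Matrix.det_diagonal]
        exact isUnit_iff_ne_zero.mpr (Finset.prod_ne_zero_iff.mpr fun i _ =>
          ne_of_gt (by have := htGpos i; linarith))
      have hAHu : IsUnit (Matrix.diagonal fun i => s + tH i).det := by
        rw [Matrix.det_diagonal]
        exact isUnit_iff_ne_zero.mpr (Finset.prod_ne_zero_iff.mpr fun i _ =>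
          ne_of_gt (by have := htHpos i; linarith))
      have hpoly : ((X : ℝ[X]) • (Matrix.diagonal fun i => s + tG i).map Polynomial.C
            - DG.map Polynomial.C).det
          = ((X : ℝ[X]) • (Matrix.diagonal fun i => s + tH i).map Polynomial.C
            - DH.map Polynomial.C).det := by
        apply Polynomial.funext; intro r
        rw [evalDetSmul, evalDetSmul]
        have e1 : r • (Matrix.diagonal fun i => s + tG i) - DG
            = (s*r) • (1 : Matrix (Fin n) (Fin n) ℝ) - DG + r • Matrix.diagonal tG := by
          ext i j
          by_cases hij : i = j <;>
            simp [Matrix.diagonal_apply, Matrix.one_apply, hij] <;> ring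
        have e2 : r • (Matrix.diagonal fun i => s + tH i) - DH
            = (s*r) • (1 : Matrix (Fin n) (Fin n) ℝ) - DH + r • Matrix.diagonal tH := by
          ext i j
          by_cases hij : i = j <;>
            simp [Matrix.diagonal_apply, Matrix.one_apply, hij] <;> ring
        rw [e1, e2, h (s*r) r]
      have hc := congrArg (fun p => Polynomial.coeff p n) hpoly
      rw [coeffDetSmul _ _ hAGu, coeffDetSmul _ _ hAHu,
        Matrix.det_diagonal, Matrix.det_diagonal] at hc
      exact hc
    -- part 5
    have h5 : Finset.univ.val.map tG = Finset.univ.val.map tH := by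
      have hq : ((Finset.univ.val.map fun i => -tG i).map fun a => (X : ℝ[X]) - Polynomial.C a).prod
          = ((Finset.univ.val.map fun i => -tH i).map fun a => (X : ℝ[X]) - Polynomial.C a).prod := by
        apply Polynomial.eq_of_infinite_eval_eq
        refine Set.Infinite.mono ?_ (Set.Ioi_infinite (0:ℝ))
        intro s hs
        have := hprod s hs
        simp only [Set.mem_setOf_eq, Polynomial.eval_multiset_prod, Multiset.map_map,
          Function.comp, Polynomial.eval_sub, Polynomial.eval_X, Polynomial.eval_C,
          sub_neg_eq_add]
        rw [Finset.prod_eq_multiset_prod, Finset.prod_eq_multiset_prod] at this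
        exact this
      have hr := congrArg Polynomial.roots hq
      rw [Polynomial.roots_multiset_prod_X_sub_C, Polynomial.roots_multiset_prod_X_sub_C] at hr
      have e : ∀ t : Fin n → ℝ,
          Finset.univ.val.map t = (Finset.univ.val.map fun i => -t i).map Neg.neg := by
        intro t
        rw [Multiset.map_map]
        refine (Multiset.map_congr rfl fun i _ => ?_).symm
        simp
      rw [e tG, e tH, hr]
    -- part 4
    have hprodT : ∏ i, tG i = ∏ i, tH i := by
      have := congrArg Multiset.prod h5
      rwa [Finset.prod_map_val, Finset.prod_map_val] at this
    have h4 : ((Matrix.diagonal fun i => 1 / Real.sqrt (tG i)) * (Matrix.diagonal tG - DG) *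
          (Matrix.diagonal fun i => 1 / Real.sqrt (tG i))).charpoly
        = ((Matrix.diagonal fun i => 1 / Real.sqrt (tH i)) * (Matrix.diagonal tH - DH) *
          (Matrix.diagonal fun i => 1 / Real.sqrt (tH i))).charpoly := by
      apply Polynomial.funext; intro x
      rw [evalCharpoly, evalCharpoly]
      set SG : Matrix (Fin n) (Fin n) ℝ := Matrix.diagonal fun i => 1 / Real.sqrt (tG i) with hSG
      have key1 : ∀ a : ℝ, 0 < a → 1/Real.sqrt a * a * (1/Real.sqrt a) = 1 := by
        intro a ha
        have hs : Real.sqrt a ≠ 0 := ne_of_gt (Real.sqrt_pos.mpr ha)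
        field_simp
        rw [Real.sq_sqrt ha.le]
      set SH : Matrix (Fin n) (Fin n) ℝ := Matrix.diagonal fun i => 1 / Real.sqrt (tH i) with hSH
      have EG : SG * Matrix.diagonal tG * SG = 1 := by
        rw [hSG, Matrix.diagonal_mul_diagonal, Matrix.diagonal_mul_diagonal]
        have e : (fun i => 1 / Real.sqrt (tG i) * tG i * (1 / Real.sqrt (tG i))) = fun _ => 1 :=
          funext fun i => key1 _ (htGpos i)
        rw [e, Matrix.diagonal_one]
      have EH : SH * Matrix.diagonal tH * SH = 1 := by
        rw [hSH, Matrix.diagonal_mul_diagonal, Matrix.diagonal_mul_diagonal]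
        have e : (fun i => 1 / Real.sqrt (tH i) * tH i * (1 / Real.sqrt (tH i))) = fun _ => 1 :=
          funext fun i => key1 _ (htHpos i)
        rw [e, Matrix.diagonal_one]
      have keyG : x • (1 : Matrix (Fin n) (Fin n) ℝ) - SG * (Matrix.diagonal tG - DG) * SG
          = SG * (x • Matrix.diagonal tG - (Matrix.diagonal tG - DG)) * SG := by
        rw [Matrix.mul_sub SG (x • Matrix.diagonal tG) (Matrix.diagonal tG - DG),
          Matrix.sub_mul (SG * (x • Matrix.diagonal tG)) (SG * (Matrix.diagonal tG - DG)) SG,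
          Matrix.mul_smul, smul_mul_assoc, EG]
      have keyH : x • (1 : Matrix (Fin n) (Fin n) ℝ) - SH * (Matrix.diagonal tH - DH) * SH
          = SH * (x • Matrix.diagonal tH - (Matrix.diagonal tH - DH)) * SH := by
        rw [Matrix.mul_sub SH (x • Matrix.diagonal tH) (Matrix.diagonal tH - DH),
          Matrix.sub_mul (SH * (x • Matrix.diagonal tH)) (SH * (Matrix.diagonal tH - DH)) SH,
          Matrix.mul_smul, smul_mul_assoc, EH]
      rw [keyG, keyH, Matrix.det_mul, Matrix.det_mul, Matrix.det_mul, Matrix.det_mul]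
      have eG : x • Matrix.diagonal tG - (Matrix.diagonal tG - DG)
          = -((0:ℝ) • (1 : Matrix (Fin n) (Fin n) ℝ) - DG + (1 - x) • Matrix.diagonal tG) := by
        simp only [zero_smul, sub_smul, one_smul]; abel
      have eH : x • Matrix.diagonal tH - (Matrix.diagonal tH - DH)
          = -((0:ℝ) • (1 : Matrix (Fin n) (Fin n) ℝ) - DH + (1 - x) • Matrix.diagonal tH) := by
        simp only [zero_smul, sub_smul, one_smul]; abel
      rw [eG, eH, Matrix.det_neg, Matrix.det_neg, h 0 (1-x)]
      have cG : SG.det * SG.det = (∏ i, tG i)⁻¹ := by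
        rw [hSG, Matrix.det_diagonal, ← Finset.prod_mul_distrib, ← Finset.prod_inv_distrib]
        refine Finset.prod_congr rfl fun i _ => ?_
        have hp := htGpos i
        rw [div_mul_div_comm, one_mul, Real.mul_self_sqrt hp.le]
        simp
      have cH : SH.det * SH.det = (∏ i, tH i)⁻¹ := by
        rw [hSH, Matrix.det_diagonal, ← Finset.prod_mul_distrib, ← Finset.prod_inv_distrib]
        refine Finset.prod_congr rfl fun i _ => ?_
        have hp := htHpos i
        rw [div_mul_div_comm, one_mul, Real.mul_self_sqrt hp.le]
        simp
      have hdd : SG.det * SG.det = SH.det * SH.det := by rw [cG, cH, hprodT]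
      rw [mul_right_comm, mul_right_comm SH.det, hdd]
    exact ⟨h1, h2, h3, h4, h5⟩
end

section
/- For any connected graph G, the normalized distance Laplacian eigenvalues satisfy (1/t_max)·∂^L_i ≤ ∂^L_norm_i ≤ (1/t_min)·∂^L_i for each i, where ∂^L_i are the distance Laplacian eigenvalues (both listed in increasing order), t_max is the maximum vertex transmission and t_min is the minimum vertex transmission. -/
open Matrix Polynomial

lemma my_charmatrix_eq {n : ℕ} (M : Matrix (Fin n) (Fin n) ℝ) :
    charmatrix M = Matrix.scalar (Fin n) X - M.map ⇑C := by
  rw [Matrix.charmatrix]; rfl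

lemma my_charpoly_conj {n : ℕ} (U D : Matrix (Fin n) (Fin n) ℝ)
    (h1 : U * Uᵀ = 1) : (U * D * Uᵀ).charpoly = D.charpoly := by
  have hmap1 : (U * Uᵀ).map ⇑C = (1 : Matrix (Fin n) (Fin n) ℝ[X]) := by
    rw [h1]; exact Matrix.map_one _ (map_zero C) (map_one C)
  have key : charmatrix (U * D * Uᵀ) = U.map ⇑C * charmatrix D * Uᵀ.map ⇑C := by
    rw [my_charmatrix_eq, my_charmatrix_eq, Matrix.map_mul, Matrix.map_mul,
      mul_sub, sub_mul]
    congr 1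
    rw [← (Matrix.scalar_commute X (fun r' => Commute.all _ _) (U.map ⇑C)).eq, mul_assoc,
      ← Matrix.map_mul, hmap1, mul_one]
  rw [Matrix.charpoly, Matrix.charpoly, key, det_mul, det_mul, mul_right_comm,
    ← det_mul, ← Matrix.map_mul, hmap1, det_one, one_mul]

lemma my_charpoly_diagonal {n : ℕ} (d : Fin n → ℝ) :
    (Matrix.diagonal d).charpoly = ∏ i, (X - C (d i)) := by
  have h : charmatrix (Matrix.diagonal d) = Matrix.diagonal (fun i => X - C (d i)) := by
    ext i j
    by_cases hij : i = j
    · subst hij; simp [charmatrix_apply, Matrix.diagonal_apply_eq]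
    · simp [charmatrix_apply, Matrix.diagonal_apply_ne _ hij, hij]
  rw [Matrix.charpoly, h, det_diagonal]

lemma my_eq_of_monotone_multiset {n : ℕ} {f g : Fin n → ℝ}
    (hf : Monotone f) (hg : Monotone g)
    (h : Multiset.map f Finset.univ.val = Multiset.map g Finset.univ.val) : f = g := by
  have hl : (List.ofFn f).Perm (List.ofFn g) := by
    rw [← Multiset.coe_eq_coe]
    simpa [List.ofFn_eq_map, ← Multiset.map_coe] using h
  exact List.ofFn_injective
    (List.Perm.eq_of_sortedLE hf.sortedLE_ofFn hg.sortedLE_ofFn hl)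

lemma my_roots_prod {n : ℕ} (f : Fin n → ℝ) :
    (∏ j, (X - C (f j))).roots = Multiset.map f Finset.univ.val := by
  rw [Finset.prod_eq_multiset_prod]
  have : Multiset.map (fun j => X - C (f j)) Finset.univ.val
      = Multiset.map (fun a => X - C a) (Multiset.map f Finset.univ.val) := by
    rw [Multiset.map_map]; rfl
  rw [this]
  exact roots_multiset_prod_X_sub_C _

lemma my_exists_perm {n : ℕ} {μ g : Fin n → ℝ} (hμ : Monotone μ)
    (h : (∏ j, (X - C (μ j))) = ∏ j, (X - C (g j))) :
    ∃ σ : Equiv.Perm (Fin n), μ = g ∘ ⇑σ := by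
  refine ⟨Tuple.sort g, my_eq_of_monotone_multiset hμ (Tuple.monotone_sort g) ?_⟩
  have hms : Multiset.map μ Finset.univ.val = Multiset.map g Finset.univ.val := by
    rw [← my_roots_prod μ, ← my_roots_prod g, h]
  rw [hms]
  have huniv : Multiset.map (⇑(Tuple.sort g)) Finset.univ.val = Finset.univ.val := by
    have := congrArg Finset.val (Finset.map_univ_equiv (Tuple.sort g))
    exact (by simpa using this)
  rw [show g ∘ ⇑(Tuple.sort g) = fun i => g ((Tuple.sort g) i) from rfl]
  calc Multiset.map g Finset.univ.val
      = Multiset.map g (Multiset.map (⇑(Tuple.sort g)) Finset.univ.val) := by rw [huniv]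
    _ = _ := by rw [Multiset.map_map]; rfl

lemma my_exists_ortho_diag {n : ℕ} (A : Matrix (Fin n) (Fin n) ℝ) (hA : A.IsHermitian)
    (μ : Fin n → ℝ) (hμ : Monotone μ) (hc : A.charpoly = ∏ j, (X - C (μ j))) :
    ∃ P : Matrix (Fin n) (Fin n) ℝ, P * Pᵀ = 1 ∧ A = P * Matrix.diagonal μ * Pᵀ ∧
      ∀ j, ∃ k, μ j = hA.eigenvalues k := by
  set U : Matrix (Fin n) (Fin n) ℝ := ↑hA.eigenvectorUnitary with hUdef
  have hstar : star U = Uᵀ := by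
    simp [Matrix.star_eq_conjTranspose]
  have hU1 : U * Uᵀ = 1 := by
    rw [← hstar]; exact Matrix.mem_unitaryGroup_iff.mp hA.eigenvectorUnitary.2
  have hofReal : (RCLike.ofReal ∘ hA.eigenvalues : Fin n → ℝ) = hA.eigenvalues := by
    funext k; simp
  have hspec : A = U * Matrix.diagonal hA.eigenvalues * Uᵀ := by
    have h := hA.spectral_theorem
    rw [hofReal, Unitary.conjStarAlgAut_apply, ← hUdef] at h
    rwa [hstar] at h
  have hcp : A.charpoly = ∏ j, (X - C (hA.eigenvalues j)) := by
    conv_lhs => rw [hspec]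
    rw [my_charpoly_conj _ _ hU1, my_charpoly_diagonal]
  obtain ⟨σ, hσ⟩ := my_exists_perm hμ (hc.symm.trans hcp)
  refine ⟨U.submatrix id ⇑σ, ?_, ?_, fun j => ⟨σ j, congrFun hσ j⟩⟩
  · rw [Matrix.transpose_submatrix, Matrix.submatrix_mul_equiv U Uᵀ id σ id,
      Matrix.submatrix_id_id, hU1]
  · have hdiag : Matrix.diagonal μ = (Matrix.diagonal hA.eigenvalues).submatrix ⇑σ ⇑σ := by
      rw [hσ]
      ext j k
      by_cases h : j = k
      · subst h; simp
      · simp [Matrix.submatrix_apply, Matrix.diagonal_apply_ne _ h,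
          Matrix.diagonal_apply_ne _ (fun hh => h (σ.injective hh))]
    rw [hdiag, Matrix.transpose_submatrix,
      Matrix.submatrix_mul_equiv U (Matrix.diagonal hA.eigenvalues) id σ ⇑σ,
      Matrix.submatrix_mul_equiv _ Uᵀ id σ id, Matrix.submatrix_id_id]
    exact hspec

lemma my_core_le {n : ℕ} (i : Fin n) (μ ν w : Fin n → ℝ) (hμ : Monotone μ) (hν : Monotone ν)
    (hμ0 : 0 ≤ μ i) {c : ℝ} (hw : ∀ j, w j ^ 2 ≤ c)
    (P Q A B : Matrix (Fin n) (Fin n) ℝ)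
    (hP : P * Pᵀ = 1) (hQ : Q * Qᵀ = 1)
    (hA : A = P * Matrix.diagonal μ * Pᵀ) (hB : B = Q * Matrix.diagonal ν * Qᵀ)
    (hSB : B = Matrix.diagonal w * A * Matrix.diagonal w) :
    ν i ≤ c * μ i := by
  classical
  set S : Matrix (Fin n) (Fin n) ℝ := Matrix.diagonal w with hSdef
  set M : Matrix (Fin n) (Fin n) ℝ :=
    Matrix.of (fun j k => if j < i then Qᵀ j k else if i < j then (Pᵀ * S) j k else 0) with hM
  have hdet : M.det = 0 :=
    Matrix.det_eq_zero_of_row_eq_zero i (fun k => by simp [hM])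
  obtain ⟨x, hx0, hxM⟩ := Matrix.exists_mulVec_eq_zero_iff.mpr hdet
  set u : Fin n → ℝ := Qᵀ *ᵥ x with hu_def
  set y : Fin n → ℝ := S *ᵥ x with hy_def
  set v : Fin n → ℝ := Pᵀ *ᵥ y with hv_def
  have hu : ∀ j, j < i → u j = 0 := by
    intro j hj
    have h1 : (M *ᵥ x) j = u j := by
      simp [hM, Matrix.mulVec, dotProduct, hj, hu_def]
    rw [hxM] at h1
    exact h1.symm.trans rfl
  have hv : ∀ j, i < j → v j = 0 := by
    intro j hj
    have h1 : (M *ᵥ x) j = v j := by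
      rw [hv_def, hy_def, Matrix.mulVec_mulVec]
      simp [hM, Matrix.mulVec, dotProduct, hj, not_lt_of_gt hj]
    rw [hxM] at h1
    exact h1.symm.trans rfl
  -- quadratic form computations
  have keyB : x ⬝ᵥ (B *ᵥ x) = ∑ j, ν j * u j ^ 2 := by
    rw [hB, ← Matrix.mulVec_mulVec, ← Matrix.mulVec_mulVec,
      Matrix.dotProduct_mulVec x Q, ← Matrix.mulVec_transpose, ← hu_def]
    simp only [dotProduct, Matrix.mulVec_diagonal]
    exact Finset.sum_congr rfl fun j _ => by ring
  have keyA : y ⬝ᵥ (A *ᵥ y) = ∑ j, μ j * v j ^ 2 := by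
    rw [hA, ← Matrix.mulVec_mulVec, ← Matrix.mulVec_mulVec,
      Matrix.dotProduct_mulVec y P, ← Matrix.mulVec_transpose, ← hv_def]
    simp only [dotProduct, Matrix.mulVec_diagonal]
    exact Finset.sum_congr rfl fun j _ => by ring
  have keyU : u ⬝ᵥ u = x ⬝ᵥ x := by
    nth_rewrite 1 [hu_def]
    rw [Matrix.mulVec_transpose, ← Matrix.dotProduct_mulVec, hu_def,
      Matrix.mulVec_mulVec, hQ, Matrix.one_mulVec]
  have keyV : v ⬝ᵥ v = y ⬝ᵥ y := by
    nth_rewrite 1 [hv_def]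
    rw [Matrix.mulVec_transpose, ← Matrix.dotProduct_mulVec, hv_def,
      Matrix.mulVec_mulVec, hP, Matrix.one_mulVec]
  have keyS : x ⬝ᵥ (B *ᵥ x) = y ⬝ᵥ (A *ᵥ y) := by
    have hST : Sᵀ = S := by rw [hSdef, Matrix.diagonal_transpose]
    rw [hSB, ← Matrix.mulVec_mulVec, ← Matrix.mulVec_mulVec,
      Matrix.dotProduct_mulVec x S, ← Matrix.mulVec_transpose, hST]
  have keyY : y ⬝ᵥ y ≤ c * (x ⬝ᵥ x) := by
    have hyj : ∀ j, y j = w j * x j := fun j => by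
      rw [hy_def, hSdef]; exact Matrix.mulVec_diagonal w x j
    simp only [dotProduct, hyj, Finset.mul_sum]
    refine Finset.sum_le_sum fun j _ => ?_
    have h2 : w j * x j * (w j * x j) = w j ^ 2 * (x j * x j) := by ring
    rw [h2]
    exact mul_le_mul_of_nonneg_right (hw j) (mul_self_nonneg _)
  have xpos : 0 < x ⬝ᵥ x := by
    rcases lt_or_eq_of_le (Finset.sum_nonneg fun j _ => mul_self_nonneg (x j)) with h | h
    · exact h
    · exact absurd (dotProduct_self_eq_zero.mp h.symm) hx0
  -- chain of inequalities
  have ineq1 : ν i * (x ⬝ᵥ x) ≤ ∑ j, ν j * u j ^ 2 := by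
    rw [← keyU]
    simp only [dotProduct, Finset.mul_sum]
    refine Finset.sum_le_sum fun j _ => ?_
    rcases lt_or_ge j i with hj | hj
    · simp [hu j hj]
    · have : u j * u j = u j ^ 2 := by ring
      rw [this]
      exact mul_le_mul_of_nonneg_right (hν hj) (sq_nonneg _)
  have ineq2 : ∑ j, μ j * v j ^ 2 ≤ μ i * (y ⬝ᵥ y) := by
    rw [← keyV]
    simp only [dotProduct, Finset.mul_sum]
    refine Finset.sum_le_sum fun j _ => ?_
    rcases le_or_gt j i with hj | hj
    · have : v j * v j = v j ^ 2 := by ring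
      rw [this]
      exact mul_le_mul_of_nonneg_right (hμ hj) (sq_nonneg _)
    · simp [hv j hj]
  have chain : ν i * (x ⬝ᵥ x) ≤ (c * μ i) * (x ⬝ᵥ x) := by
    calc ν i * (x ⬝ᵥ x) ≤ ∑ j, ν j * u j ^ 2 := ineq1
      _ = x ⬝ᵥ (B *ᵥ x) := keyB.symm
      _ = y ⬝ᵥ (A *ᵥ y) := keyS
      _ = ∑ j, μ j * v j ^ 2 := keyA
      _ ≤ μ i * (y ⬝ᵥ y) := ineq2
      _ ≤ μ i * (c * (x ⬝ᵥ x)) := mul_le_mul_of_nonneg_left keyY hμ0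
      _ = (c * μ i) * (x ⬝ᵥ x) := by ring
  exact le_of_mul_le_mul_right chain xpos

lemma my_core_ge {n : ℕ} (i : Fin n) (μ ν w : Fin n → ℝ) (hμ : Monotone μ) (hν : Monotone ν)
    (hμ0 : 0 ≤ μ i) {c : ℝ} (hw : ∀ j, c ≤ w j ^ 2)
    (P Q A B : Matrix (Fin n) (Fin n) ℝ)
    (hP : P * Pᵀ = 1) (hQ : Q * Qᵀ = 1)
    (hA : A = P * Matrix.diagonal μ * Pᵀ) (hB : B = Q * Matrix.diagonal ν * Qᵀ)
    (hSB : B = Matrix.diagonal w * A * Matrix.diagonal w) :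
    c * μ i ≤ ν i := by
  classical
  set S : Matrix (Fin n) (Fin n) ℝ := Matrix.diagonal w with hSdef
  set M : Matrix (Fin n) (Fin n) ℝ :=
    Matrix.of (fun j k => if j < i then (Pᵀ * S) j k else if i < j then Qᵀ j k else 0) with hM
  have hdet : M.det = 0 :=
    Matrix.det_eq_zero_of_row_eq_zero i (fun k => by simp [hM])
  obtain ⟨x, hx0, hxM⟩ := Matrix.exists_mulVec_eq_zero_iff.mpr hdet
  set u : Fin n → ℝ := Qᵀ *ᵥ x with hu_def
  set y : Fin n → ℝ := S *ᵥ x with hy_def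
  set v : Fin n → ℝ := Pᵀ *ᵥ y with hv_def
  have hu : ∀ j, i < j → u j = 0 := by
    intro j hj
    have h1 : (M *ᵥ x) j = u j := by
      simp [hM, Matrix.mulVec, dotProduct, hj, not_lt_of_gt hj, hu_def]
    rw [hxM] at h1
    exact h1.symm.trans rfl
  have hv : ∀ j, j < i → v j = 0 := by
    intro j hj
    have h1 : (M *ᵥ x) j = v j := by
      rw [hv_def, hy_def, Matrix.mulVec_mulVec]
      simp [hM, Matrix.mulVec, dotProduct, hj]
    rw [hxM] at h1
    exact h1.symm.trans rfl
  have keyB : x ⬝ᵥ (B *ᵥ x) = ∑ j, ν j * u j ^ 2 := by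
    rw [hB, ← Matrix.mulVec_mulVec, ← Matrix.mulVec_mulVec,
      Matrix.dotProduct_mulVec x Q, ← Matrix.mulVec_transpose, ← hu_def]
    simp only [dotProduct, Matrix.mulVec_diagonal]
    exact Finset.sum_congr rfl fun j _ => by ring
  have keyA : y ⬝ᵥ (A *ᵥ y) = ∑ j, μ j * v j ^ 2 := by
    rw [hA, ← Matrix.mulVec_mulVec, ← Matrix.mulVec_mulVec,
      Matrix.dotProduct_mulVec y P, ← Matrix.mulVec_transpose, ← hv_def]
    simp only [dotProduct, Matrix.mulVec_diagonal]
    exact Finset.sum_congr rfl fun j _ => by ring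
  have keyU : u ⬝ᵥ u = x ⬝ᵥ x := by
    nth_rewrite 1 [hu_def]
    rw [Matrix.mulVec_transpose, ← Matrix.dotProduct_mulVec, hu_def,
      Matrix.mulVec_mulVec, hQ, Matrix.one_mulVec]
  have keyV : v ⬝ᵥ v = y ⬝ᵥ y := by
    nth_rewrite 1 [hv_def]
    rw [Matrix.mulVec_transpose, ← Matrix.dotProduct_mulVec, hv_def,
      Matrix.mulVec_mulVec, hP, Matrix.one_mulVec]
  have keyS : x ⬝ᵥ (B *ᵥ x) = y ⬝ᵥ (A *ᵥ y) := by
    have hST : Sᵀ = S := by rw [hSdef, Matrix.diagonal_transpose]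
    rw [hSB, ← Matrix.mulVec_mulVec, ← Matrix.mulVec_mulVec,
      Matrix.dotProduct_mulVec x S, ← Matrix.mulVec_transpose, hST]
  have keyY : c * (x ⬝ᵥ x) ≤ y ⬝ᵥ y := by
    have hyj : ∀ j, y j = w j * x j := fun j => by
      rw [hy_def, hSdef]; exact Matrix.mulVec_diagonal w x j
    simp only [dotProduct, hyj, Finset.mul_sum]
    refine Finset.sum_le_sum fun j _ => ?_
    have h2 : w j * x j * (w j * x j) = w j ^ 2 * (x j * x j) := by ring
    rw [h2]
    exact mul_le_mul_of_nonneg_right (hw j) (mul_self_nonneg _)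
  have xpos : 0 < x ⬝ᵥ x := by
    rcases lt_or_eq_of_le (Finset.sum_nonneg fun j _ => mul_self_nonneg (x j)) with h | h
    · exact h
    · exact absurd (dotProduct_self_eq_zero.mp h.symm) hx0
  have ineq1 : ∑ j, ν j * u j ^ 2 ≤ ν i * (x ⬝ᵥ x) := by
    rw [← keyU]
    simp only [dotProduct, Finset.mul_sum]
    refine Finset.sum_le_sum fun j _ => ?_
    rcases le_or_gt j i with hj | hj
    · have : u j * u j = u j ^ 2 := by ring
      rw [this]
      exact mul_le_mul_of_nonneg_right (hν hj) (sq_nonneg _)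
    · simp [hu j hj]
  have ineq2 : μ i * (y ⬝ᵥ y) ≤ ∑ j, μ j * v j ^ 2 := by
    rw [← keyV]
    simp only [dotProduct, Finset.mul_sum]
    refine Finset.sum_le_sum fun j _ => ?_
    rcases lt_or_ge j i with hj | hj
    · simp [hv j hj]
    · have : v j * v j = v j ^ 2 := by ring
      rw [this]
      exact mul_le_mul_of_nonneg_right (hμ hj) (sq_nonneg _)
  have chain : (c * μ i) * (x ⬝ᵥ x) ≤ ν i * (x ⬝ᵥ x) := by
    calc (c * μ i) * (x ⬝ᵥ x) = μ i * (c * (x ⬝ᵥ x)) := by ring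
      _ ≤ μ i * (y ⬝ᵥ y) := mul_le_mul_of_nonneg_left keyY hμ0
      _ ≤ ∑ j, μ j * v j ^ 2 := ineq2
      _ = y ⬝ᵥ (A *ᵥ y) := keyA.symm
      _ = x ⬝ᵥ (B *ᵥ x) := keyS.symm
      _ = ∑ j, ν j * u j ^ 2 := keyB
      _ ≤ ν i * (x ⬝ᵥ x) := ineq1
  exact le_of_mul_le_mul_right chain xpos

lemma my_dl_quadform_nonneg {n : ℕ} (t : Fin n → ℝ) (d : Fin n → Fin n → ℝ)
    (hd0 : ∀ i j, 0 ≤ d i j) (hsym : ∀ i j, d i j = d j i)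
    (ht : ∀ i, t i = ∑ j, d i j) (x : Fin n → ℝ) :
    0 ≤ x ⬝ᵥ ((Matrix.diagonal t - Matrix.of d) *ᵥ x) := by
  classical
  have hdiagpart : x ⬝ᵥ (Matrix.diagonal t *ᵥ x) = ∑ i, ∑ j, d i j * x i ^ 2 := by
    simp only [dotProduct, Matrix.mulVec_diagonal]
    refine Finset.sum_congr rfl fun i _ => ?_
    rw [ht i, Finset.sum_mul, Finset.mul_sum]
    exact Finset.sum_congr rfl fun j _ => by ring
  have hoffpart : x ⬝ᵥ (Matrix.of d *ᵥ x) = ∑ i, ∑ j, d i j * (x i * x j) := by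
    simp only [dotProduct, Matrix.mulVec, Matrix.of_apply, Finset.mul_sum]
    exact Finset.sum_congr rfl fun i _ => Finset.sum_congr rfl fun j _ => by ring
  have hsplit : x ⬝ᵥ ((Matrix.diagonal t - Matrix.of d) *ᵥ x)
      = (∑ i, ∑ j, d i j * x i ^ 2) - ∑ i, ∑ j, d i j * (x i * x j) := by
    rw [Matrix.sub_mulVec, dotProduct_sub, hdiagpart, hoffpart]
  have hswap : ∑ i, ∑ j, d i j * x j ^ 2 = ∑ i, ∑ j, d i j * x i ^ 2 := by
    rw [Finset.sum_comm]
    exact Finset.sum_congr rfl fun j _ => Finset.sum_congr rfl fun i _ => by rw [hsym]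
  have hexp : ∑ i, ∑ j, d i j * (x i - x j) ^ 2
      = ((∑ i, ∑ j, d i j * x i ^ 2) + ∑ i, ∑ j, d i j * x j ^ 2)
        - 2 * ∑ i, ∑ j, d i j * (x i * x j) := by
    have hterm : ∀ i j, d i j * (x i - x j) ^ 2
        = (d i j * x i ^ 2 + d i j * x j ^ 2) - 2 * (d i j * (x i * x j)) :=
      fun i j => by ring
    simp_rw [hterm, Finset.sum_sub_distrib, Finset.sum_add_distrib, ← Finset.mul_sum]
  have hnn : 0 ≤ ∑ i, ∑ j, d i j * (x i - x j) ^ 2 :=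
    Finset.sum_nonneg fun i _ => Finset.sum_nonneg fun j _ =>
      mul_nonneg (hd0 i j) (sq_nonneg _)
  rw [hsplit]
  rw [hswap] at hexp
  linarith

theorem stmt15 {n : ℕ} (G : SimpleGraph (Fin n)) (hG : G.Connected)
    (t : Fin n → ℝ) (ht : t = fun i => ∑ j, (G.dist i j : ℝ))
    (tmax tmin : ℝ)
    (hmax : (∀ i, t i ≤ tmax) ∧ ∃ i, t i = tmax)
    (hmin : (∀ i, tmin ≤ t i) ∧ ∃ i, t i = tmin)
    (htmin : 0 < tmin)
    (DL DLn : Matrix (Fin n) (Fin n) ℝ)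
    (hDL : DL = Matrix.diagonal t - Matrix.of fun i j => (G.dist i j : ℝ))
    (hDLn : DLn = (Matrix.diagonal fun i => 1 / Real.sqrt (t i)) * DL *
        (Matrix.diagonal fun i => 1 / Real.sqrt (t i)))
    (μ ν : Fin n → ℝ) (hμ : Monotone μ) (hν : Monotone ν)
    (hcμ : DL.charpoly = ∏ i, (X - C (μ i)))
    (hcν : DLn.charpoly = ∏ i, (X - C (ν i))) :
    ∀ i, (1 / tmax) * μ i ≤ ν i ∧ ν i ≤ (1 / tmin) * μ i := by
  classical
  intro i
  set d : Fin n → Fin n → ℝ := fun a b => (G.dist a b : ℝ) with hd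
  have hd0 : ∀ a b, 0 ≤ d a b := fun a b => Nat.cast_nonneg _
  have hdsym : ∀ a b, d a b = d b a := fun a b => by
    simp only [hd]
    rw [SimpleGraph.dist_comm]
  have htv : ∀ a, t a = ∑ b, d a b := fun a => by rw [ht]
  have hermDL : DL.IsHermitian := by
    rw [hDL]
    show _ᴴ = _
    ext a b
    simp only [Matrix.conjTranspose_apply, Matrix.sub_apply, Matrix.diagonal_apply,
      Matrix.of_apply, star_trivial]
    by_cases hab : a = b
    · subst hab; simp
    · rw [if_neg hab, if_neg (Ne.symm hab), hdsym b a]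
  have hPSD : DL.PosSemidef := by
    refine posSemidef_iff_dotProduct_mulVec.mpr ⟨hermDL, fun x => ?_⟩
    have h := my_dl_quadform_nonneg t d hd0 hdsym htv x
    rw [hDL]
    simpa using h
  have hermDLn : DLn.IsHermitian := by
    rw [hDLn]
    have hS : ((Matrix.diagonal fun i => 1 / Real.sqrt (t i)) :
        Matrix (Fin n) (Fin n) ℝ)ᴴ = Matrix.diagonal fun i => 1 / Real.sqrt (t i) :=
      Matrix.isHermitian_diagonal _
    have hDLe : DLᴴ = DL := hermDL
    show _ᴴ = _
    rw [Matrix.conjTranspose_mul, Matrix.conjTranspose_mul, hS, hDLe, ← Matrix.mul_assoc]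
  obtain ⟨P, hP1, hPA, hPe⟩ := my_exists_ortho_diag DL hPSD.1 μ hμ hcμ
  obtain ⟨Q, hQ1, hQB, _⟩ := my_exists_ortho_diag DLn hermDLn ν hν hcν
  have hμ0 : ∀ j, 0 ≤ μ j := fun j => by
    obtain ⟨k, hk⟩ := hPe j
    rw [hk]
    exact hPSD.eigenvalues_nonneg k
  set w : Fin n → ℝ := fun j => 1 / Real.sqrt (t j) with hw
  have htpos : ∀ j, 0 < t j := fun j => lt_of_lt_of_le htmin (hmin.1 j)
  have hw2 : ∀ j, w j ^ 2 = 1 / t j := fun j => by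
    simp only [hw, div_pow, one_pow, Real.sq_sqrt (htpos j).le]
  have htmaxpos : 0 < tmax := by
    obtain ⟨k, hk⟩ := hmax.2
    exact lt_of_lt_of_le htmin (hk ▸ hmin.1 k)
  have hwle : ∀ j, w j ^ 2 ≤ 1 / tmin := fun j => by
    rw [hw2]
    exact one_div_le_one_div_of_le htmin (hmin.1 j)
  have hwge : ∀ j, 1 / tmax ≤ w j ^ 2 := fun j => by
    rw [hw2]
    exact one_div_le_one_div_of_le (htpos j) (hmax.1 j)
  have hSB : DLn = Matrix.diagonal w * DL * Matrix.diagonal w := hDLn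
  exact ⟨my_core_ge i μ ν w hμ hν (hμ0 i) hwge P Q DL DLn hP1 hQ1 hPA hQB hSB,
    my_core_le i μ ν w hμ hν (hμ0 i) hwle P Q DL DLn hP1 hQ1 hPA hQB hSB⟩
end
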